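/- Let ξ : ℝ → ℝ be a Lipschitz function with Lipschitz constant Lip(ξ) that vanishes outside (−1,1). Let μ, ν be finite Borel measures on ℝⁿ, x, z ∈ ℝⁿ, ε ∈ (0,1], and let B = B(x, ε + |x−z|) be the open ball of radius ε + |x−z| centered at x. Then |∫ ξ(|y−z|/ε) dμ(y) − ∫ ξ(|y−x|/ε) dν(y)| ≤ (Lip(ξ)/ε) · (Δ_B(μ,ν) + |x−z| · ν(B)). -/

import Mathlib

open MeasureTheory

noncomputable section

/-- Localized bounded Lipschitz (flat) distance
`Δ_U(μ,ν) = sup { ∫φ dμ − ∫φ dν : φ 1-Lipschitz, |φ| ≤ 1, φ = 0 outside U }`. -/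
def flatDistIn {X : Type*} [MeasurableSpace X] [PseudoMetricSpace X]
    (U : Set X) (μ ν : Measure X) : ℝ :=
  sSup {r | ∃ φ : X → ℝ, LipschitzWith 1 φ ∧ (∀ x, |φ x| ≤ 1) ∧ (∀ x ∉ U, φ x = 0) ∧
    r = (∫ x, φ x ∂μ) - ∫ x, φ x ∂ν}

lemma integrable_of_abs_le {X : Type*} [MeasurableSpace X] [PseudoMetricSpace X]
    [OpensMeasurableSpace X] {ψ : X → ℝ} (hc : Continuous ψ) {C : ℝ}
    (hb : ∀ x, |ψ x| ≤ C) (κ : Measure X) [IsFiniteMeasure κ] : Integrable ψ κ :=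
  (integrable_const C).mono' hc.aestronglyMeasurable
    (ae_of_all _ fun y => by simpa [Real.norm_eq_abs] using hb y)

lemma le_flatDistIn {X : Type*} [MeasurableSpace X] [PseudoMetricSpace X]
    [OpensMeasurableSpace X]
    (U : Set X) (μ ν : Measure X) [IsFiniteMeasure μ] [IsFiniteMeasure ν]
    (φ : X → ℝ) (h1 : LipschitzWith 1 φ) (h2 : ∀ x, |φ x| ≤ 1)
    (h3 : ∀ x ∉ U, φ x = 0) :
    (∫ x, φ x ∂μ) - ∫ x, φ x ∂ν ≤ flatDistIn U μ ν := by
  apply le_csSup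
  · refine ⟨(μ Set.univ).toReal + (ν Set.univ).toReal, ?_⟩
    rintro r ⟨ψ, hψ1, hψ2, -, rfl⟩
    have hintμ : Integrable ψ μ := integrable_of_abs_le hψ1.continuous hψ2 μ
    have hintν : Integrable ψ ν := integrable_of_abs_le hψ1.continuous hψ2 ν
    have h1' : (∫ x, ψ x ∂μ) ≤ (μ Set.univ).toReal := by
      calc (∫ x, ψ x ∂μ) ≤ ∫ _, (1 : ℝ) ∂μ :=
            integral_mono hintμ (integrable_const 1) fun y => (abs_le.1 (hψ2 y)).2
        _ = (μ Set.univ).toReal := by simp; rfl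
    have h2' : -(ν Set.univ).toReal ≤ ∫ x, ψ x ∂ν := by
      calc -(ν Set.univ).toReal = ∫ _, (-1 : ℝ) ∂ν := by simp; rfl
        _ ≤ ∫ x, ψ x ∂ν :=
            integral_mono (integrable_const (-1)) hintν fun y => (abs_le.1 (hψ2 y)).1
    linarith
  · exact ⟨φ, h1, h2, h3, rfl⟩

theorem stmt9 {n : ℕ} (ξ : ℝ → ℝ) (L : NNReal) (hξ : LipschitzWith L ξ)
    (hξsupp : ∀ s, s ∉ Set.Ioo (-1 : ℝ) 1 → ξ s = 0)
    (μ ν : Measure (EuclideanSpace ℝ (Fin n))) [IsFiniteMeasure μ] [IsFiniteMeasure ν]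
    (x z : EuclideanSpace ℝ (Fin n)) (ε : ℝ) (hε : ε ∈ Set.Ioc (0 : ℝ) 1) :
    |(∫ y, ξ (‖y - z‖ / ε) ∂μ) - ∫ y, ξ (‖y - x‖ / ε) ∂ν| ≤
      ((L : ℝ) / ε) *
        (flatDistIn (Metric.ball x (ε + ‖x - z‖)) μ ν +
          ‖x - z‖ * (ν (Metric.ball x (ε + ‖x - z‖))).toReal) := by
  obtain ⟨hε0, hε1⟩ := hε
  have hL : ∀ a b : ℝ, |ξ a - ξ b| ≤ (L : ℝ) * |a - b| := fun a b => by
    simpa [Real.dist_eq] using hξ.dist_le_mul a b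
  have hξ1 : ξ 1 = 0 := hξsupp 1 (by simp)
  -- bound on ξ for nonnegative arguments
  have hbd : ∀ s : ℝ, 0 ≤ s → |ξ s| ≤ (L : ℝ) := by
    intro s hs
    by_cases h1 : 1 ≤ s
    · rw [hξsupp s (by simp [Set.mem_Ioo]; intro; linarith)]
      simpa using L.coe_nonneg
    · push_neg at h1
      have := hL s 1
      rw [hξ1, sub_zero] at this
      have : |ξ s| ≤ (L : ℝ) * |s - 1| := this
      have h2 : |s - 1| ≤ 1 := by rw [abs_le]; constructor <;> linarith
      nlinarith [abs_nonneg (ξ s), L.coe_nonneg]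
  rcases eq_or_lt_of_le L.coe_nonneg with hL0 | hL0
  · -- L = 0 : ξ is identically 0
    have hz : ∀ s : ℝ, ξ s = 0 := by
      intro s
      have := hL s 1
      rw [hξ1, sub_zero, ← hL0, zero_mul] at this
      have := abs_nonpos_iff.1 this
      linarith [abs_nonneg (ξ s), this]
    simp [hz, ← hL0]
  -- main case : L > 0
  set c : ℝ := ε + ‖x - z‖ with hc
  set B : Set (EuclideanSpace ℝ (Fin n)) := Metric.ball x c with hB
  have hnn : ∀ (w y : EuclideanSpace ℝ (Fin n)), (0 : ℝ) ≤ ‖y - w‖ / ε :=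
    fun w y => div_nonneg (norm_nonneg _) hε0.le
  have hcont : ∀ w : EuclideanSpace ℝ (Fin n),
      Continuous fun y : EuclideanSpace ℝ (Fin n) => ξ (‖y - w‖ / ε) := fun w =>
    hξ.continuous.comp (((continuous_id.sub continuous_const).norm).div_const ε)
  have hint : ∀ (w : EuclideanSpace ℝ (Fin n)) (κ : Measure (EuclideanSpace ℝ (Fin n)))
      [IsFiniteMeasure κ], Integrable (fun y => ξ (‖y - w‖ / ε)) κ := fun w κ _ =>
    integrable_of_abs_le (hcont w) (fun y => hbd _ (hnn w y)) κ
  -- vanishing outside B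
  have hvz : ∀ y ∉ B, ξ (‖y - z‖ / ε) = 0 := by
    intro y hy
    have hyx : c ≤ ‖y - x‖ := by
      simpa [hB, Metric.mem_ball, dist_eq_norm, not_lt] using hy
    have htri : ‖y - x‖ ≤ ‖y - z‖ + ‖x - z‖ := by
      calc ‖y - x‖ = ‖(y - z) + (z - x)‖ := by rw [sub_add_sub_cancel]
        _ ≤ ‖y - z‖ + ‖z - x‖ := norm_add_le _ _
        _ = ‖y - z‖ + ‖x - z‖ := by rw [norm_sub_rev z x]
    have : (1 : ℝ) ≤ ‖y - z‖ / ε := by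
      rw [le_div_iff₀ hε0]
      simp only [hc] at hyx
      linarith
    exact hξsupp _ (by simp [Set.mem_Ioo]; intro; linarith)
  have hvx : ∀ y ∉ B, ξ (‖y - x‖ / ε) = 0 := by
    intro y hy
    have hyx : c ≤ ‖y - x‖ := by
      simpa [hB, Metric.mem_ball, dist_eq_norm, not_lt] using hy
    have : (1 : ℝ) ≤ ‖y - x‖ / ε := by
      rw [le_div_iff₀ hε0]
      have : (0:ℝ) ≤ ‖x - z‖ := norm_nonneg _
      simp only [hc] at hyx
      linarith
    exact hξsupp _ (by simp [Set.mem_Ioo]; intro; linarith)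
  -- the test function
  set φ : EuclideanSpace ℝ (Fin n) → ℝ := fun y => (ε / L) * ξ (‖y - z‖ / ε) with hφ
  have hεL : (0 : ℝ) < ε / L := div_pos hε0 hL0
  have h1 : LipschitzWith 1 φ := by
    apply LipschitzWith.of_dist_le_mul
    intro a b
    simp only [hφ, Real.dist_eq, NNReal.coe_one, one_mul]
    have key : |ξ (‖a - z‖ / ε) - ξ (‖b - z‖ / ε)| ≤ (L : ℝ) * (dist a b / ε) := by
      calc |ξ (‖a - z‖ / ε) - ξ (‖b - z‖ / ε)|
          ≤ (L : ℝ) * |‖a - z‖ / ε - ‖b - z‖ / ε| := hL _ _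
        _ = (L : ℝ) * (|‖a - z‖ - ‖b - z‖| / ε) := by
            rw [div_sub_div_same, abs_div, abs_of_pos hε0]
        _ ≤ (L : ℝ) * (dist a b / ε) := by
            gcongr
            calc |‖a - z‖ - ‖b - z‖| ≤ ‖(a - z) - (b - z)‖ := abs_norm_sub_norm_le _ _
              _ = dist a b := by rw [dist_eq_norm]; congr 1; abel
    calc |ε / L * ξ (‖a - z‖ / ε) - ε / L * ξ (‖b - z‖ / ε)|
        = (ε / L) * |ξ (‖a - z‖ / ε) - ξ (‖b - z‖ / ε)| := by
          rw [← mul_sub, abs_mul, abs_of_pos hεL]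
      _ ≤ (ε / L) * ((L : ℝ) * (dist a b / ε)) := by
          exact mul_le_mul_of_nonneg_left key hεL.le
      _ = dist a b := by field_simp
  have h2 : ∀ y, |φ y| ≤ 1 := by
    intro y
    simp only [hφ]
    rw [abs_mul, abs_of_pos hεL]
    calc ε / L * |ξ (‖y - z‖ / ε)| ≤ ε / L * L :=
          mul_le_mul_of_nonneg_left (hbd _ (hnn z y)) hεL.le
      _ = ε := by field_simp
      _ ≤ 1 := hε1
  have h3 : ∀ y ∉ B, φ y = 0 := fun y hy => by simp [hφ, hvz y hy]
  -- flat distance bound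
  have hφint : ∀ (κ : Measure (EuclideanSpace ℝ (Fin n))) [IsFiniteMeasure κ],
      Integrable φ κ := fun κ _ => integrable_of_abs_le h1.continuous h2 κ
  have hr1 : (∫ y, φ y ∂μ) - ∫ y, φ y ∂ν ≤ flatDistIn B μ ν :=
    le_flatDistIn B μ ν φ h1 h2 h3
  have hr2 : -((∫ y, φ y ∂μ) - ∫ y, φ y ∂ν) ≤ flatDistIn B μ ν := by
    have h := le_flatDistIn B μ ν (fun y => -φ y) h1.neg (fun y => by simpa using h2 y)
      (fun y hy => by simp [h3 y hy])
    simp only [integral_neg] at h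
    linarith
  have habs : |(∫ y, φ y ∂μ) - ∫ y, φ y ∂ν| ≤ flatDistIn B μ ν := abs_le.2 ⟨by linarith, hr1⟩
  -- rewrite in terms of the integrals of ξ
  have hμφ : (∫ y, φ y ∂μ) = (ε / L) * ∫ y, ξ (‖y - z‖ / ε) ∂μ := integral_const_mul _ _
  have hνφ : (∫ y, φ y ∂ν) = (ε / L) * ∫ y, ξ (‖y - z‖ / ε) ∂ν := integral_const_mul _ _
  set D : ℝ := (∫ y, ξ (‖y - z‖ / ε) ∂μ) - ∫ y, ξ (‖y - z‖ / ε) ∂ν with hD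
  have hDle : |D| ≤ ((L : ℝ) / ε) * flatDistIn B μ ν := by
    have : |(∫ y, φ y ∂μ) - ∫ y, φ y ∂ν| = (ε / L) * |D| := by
      rw [hμφ, hνφ, ← mul_sub, abs_mul, abs_of_pos hεL, hD]
    rw [this] at habs
    rw [div_mul_eq_mul_div, le_div_iff₀ hε0]
    calc |D| * ε = (ε / L * |D|) * L := by field_simp
      _ ≤ flatDistIn B μ ν * L := mul_le_mul_of_nonneg_right habs L.coe_nonneg
      _ = (L : ℝ) * flatDistIn B μ ν := mul_comm _ _
  -- second piece
  set C : ℝ := ((L : ℝ) / ε) * ‖x - z‖ with hCdef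
  have hC0 : 0 ≤ C := mul_nonneg (div_nonneg L.coe_nonneg hε0.le) (norm_nonneg _)
  set g : EuclideanSpace ℝ (Fin n) → ℝ := fun y => ξ (‖y - z‖ / ε) - ξ (‖y - x‖ / ε) with hg
  have hgint : Integrable g ν := (hint z ν).sub (hint x ν)
  have hgbd : ∀ y, |g y| ≤ Set.indicator B (fun _ => C) y := by
    intro y
    by_cases hy : y ∈ B
    · rw [Set.indicator_of_mem hy]
      simp only [hg]
      calc |ξ (‖y - z‖ / ε) - ξ (‖y - x‖ / ε)|
          ≤ (L : ℝ) * |‖y - z‖ / ε - ‖y - x‖ / ε| := hL _ _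
        _ = (L : ℝ) * (|‖y - z‖ - ‖y - x‖| / ε) := by
            rw [div_sub_div_same, abs_div, abs_of_pos hε0]
        _ ≤ (L : ℝ) * (‖x - z‖ / ε) := by
            gcongr
            calc |‖y - z‖ - ‖y - x‖| ≤ ‖(y - z) - (y - x)‖ := abs_norm_sub_norm_le _ _
              _ = ‖x - z‖ := by congr 1; abel
        _ = C := by rw [hCdef]; ring
    · rw [Set.indicator_of_notMem hy]
      simp [hg, hvz y hy, hvx y hy]
  have hD2 : |∫ y, g y ∂ν| ≤ C * (ν B).toReal := by
    calc |∫ y, g y ∂ν| ≤ ∫ y, |g y| ∂ν := by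
          simpa [Real.norm_eq_abs] using norm_integral_le_integral_norm (μ := ν) g
      _ ≤ ∫ y, Set.indicator B (fun _ => C) y ∂ν :=
          integral_mono hgint.abs ((integrable_const C).indicator Metric.isOpen_ball.measurableSet) hgbd
      _ = C * (ν B).toReal := by
          rw [integral_indicator_const _ Metric.isOpen_ball.measurableSet]
          simp [mul_comm]
          exact Or.inl rfl
  have hgsplit : (∫ y, g y ∂ν) = (∫ y, ξ (‖y - z‖ / ε) ∂ν) - ∫ y, ξ (‖y - x‖ / ε) ∂ν :=
    integral_sub (hint z ν) (hint x ν)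
  -- combine
  have htri : |(∫ y, ξ (‖y - z‖ / ε) ∂μ) - ∫ y, ξ (‖y - x‖ / ε) ∂ν| ≤ |D| + |∫ y, g y ∂ν| := by
    rw [hgsplit, hD]
    exact abs_sub_le _ _ _
  calc |(∫ y, ξ (‖y - z‖ / ε) ∂μ) - ∫ y, ξ (‖y - x‖ / ε) ∂ν|
      ≤ |D| + |∫ y, g y ∂ν| := htri
    _ ≤ ((L : ℝ) / ε) * flatDistIn B μ ν + C * (ν B).toReal := add_le_add hDle hD2
    _ = ((L : ℝ) / ε) * (flatDistIn B μ ν + ‖x - z‖ * (ν B).toReal) := by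
        rw [hCdef]; ring

end
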